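/- Under the hypotheses of the previous lemma, the condition sup_{x≥M₀} |φ''(x)/(φ'(x))³| ≤ C implies that e^{-φ(x)}/φ'(x) → 0 as x → ∞; in particular φ(x) → +∞ as x → ∞. -/

import Mathlib

open Filter

lemma aux_tendsto_sqrt_atTop : Tendsto Real.sqrt atTop atTop :=
  tendsto_atTop_atTop.2 fun b => ⟨b ^ 2, fun a ha => Real.le_sqrt_of_sq_le ha⟩

/-- under the bound on `φ''/(φ')³`, `e^{-φ(x)}/φ'(x) → 0` and `φ(x) → +∞` as `x → ∞`. -/
theorem exp_neg_div_deriv_tendsto_zero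
    (M₀ C : ℝ) (φ φ' φ'' : ℝ → ℝ)
    (hφ0 : ∀ x ∈ Set.Ici M₀, 0 ≤ φ x)
    (hd1 : ∀ x ∈ Set.Ici M₀, HasDerivAt φ (φ' x) x)
    (hd2 : ∀ x ∈ Set.Ici M₀, HasDerivAt φ' (φ'' x) x)
    (hc2 : ContinuousOn φ'' (Set.Ici M₀))
    (hpos : ∀ x ∈ Set.Ici M₀, 0 < φ' x)
    (hbound : ∀ x ∈ Set.Ici M₀, |φ'' x / (φ' x) ^ 3| ≤ C) :
    Tendsto (fun x => Real.exp (-φ x) / φ' x) atTop (nhds 0) ∧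
      Tendsto φ atTop atTop := by
  have hM₀ : M₀ ∈ Set.Ici M₀ := Set.self_mem_Ici
  have hC0 : 0 ≤ C := (abs_nonneg _).trans (hbound M₀ hM₀)
  set B : ℝ := 2 * C + 1 with hBdef
  have hB : 0 < B := by positivity
  set A : ℝ := ((φ' M₀) ^ 2)⁻¹ with hAdef
  have hA : 0 < A := by
    have := hpos M₀ hM₀; positivity
  set S : ℝ → ℝ := fun x => A + B * (x - M₀) with hSdef
  have hSpos : ∀ x ∈ Set.Ici M₀, 0 < S x := by
    intro x hx
    have : (0:ℝ) ≤ x - M₀ := sub_nonneg.2 hx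
    have : 0 ≤ B * (x - M₀) := by positivity
    simp only [hSdef]; linarith
  -- derivative of g = 1/(φ')²
  set g : ℝ → ℝ := fun x => ((φ' x) ^ 2)⁻¹ with hgdef
  have hg : ∀ x ∈ Set.Ici M₀,
      HasDerivAt g (-(2 * φ' x ^ 1 * φ'' x) / ((φ' x) ^ 2) ^ 2) x := by
    intro x hx
    have := hpos x hx
    exact ((hd2 x hx).pow 2).inv (pow_pos this 2).ne'
  -- bound on derivative of g
  have hgbd : ∀ x ∈ Set.Ici M₀, ‖-(2 * φ' x ^ 1 * φ'' x) / ((φ' x) ^ 2) ^ 2‖ ≤ B := by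
    intro x hx
    have hp := hpos x hx
    have hne : φ' x ≠ 0 := ne_of_gt hp
    have : -(2 * φ' x ^ 1 * φ'' x) / ((φ' x) ^ 2) ^ 2 = -2 * (φ'' x / (φ' x) ^ 3) := by
      field_simp
    rw [this, Real.norm_eq_abs, abs_mul, abs_neg]
    have h2 : |φ'' x / (φ' x) ^ 3| ≤ C := hbound x hx
    have : |(2:ℝ)| = 2 := by norm_num
    rw [this]
    nlinarith [abs_nonneg (φ'' x / (φ' x) ^ 3)]
  -- mean value inequality: g x ≤ A + B (x - M₀)
  have hgle : ∀ x ∈ Set.Ici M₀, g x ≤ S x := by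
    intro x hx
    have := (convex_Ici M₀).norm_image_sub_le_of_norm_hasDerivWithin_le
      (f := g) (f' := fun x => -(2 * φ' x ^ 1 * φ'' x) / ((φ' x) ^ 2) ^ 2)
      (fun y hy => (hg y hy).hasDerivWithinAt) hgbd hM₀ hx
    rw [Real.norm_eq_abs, Real.norm_eq_abs] at this
    have h1 : g x - g M₀ ≤ |g x - g M₀| := le_abs_self _
    have h2 : |x - M₀| = x - M₀ := abs_of_nonneg (sub_nonneg.2 hx)
    rw [h2] at this
    have : g x - g M₀ ≤ B * (x - M₀) := h1.trans this
    simp only [hSdef, hgdef, hAdef] at *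
    linarith
  -- 1/φ' x ≤ √(S x)
  have hinvle : ∀ x ∈ Set.Ici M₀, (φ' x)⁻¹ ≤ Real.sqrt (S x) := by
    intro x hx
    have hp := hpos x hx
    apply Real.le_sqrt_of_sq_le
    calc ((φ' x)⁻¹) ^ 2 = ((φ' x) ^ 2)⁻¹ := by rw [inv_pow]
      _ ≤ S x := hgle x hx
  -- φ' x ≥ 1/√(S x)
  have hge : ∀ x ∈ Set.Ici M₀, (Real.sqrt (S x))⁻¹ ≤ φ' x := by
    intro x hx
    have hp := hpos x hx
    have hs : 0 < Real.sqrt (S x) := Real.sqrt_pos.2 (hSpos x hx)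
    rw [inv_le_comm₀ hs hp]
    exact hinvle x hx
  -- ψ and its derivative
  set ψ : ℝ → ℝ := fun x => (2 / B) * Real.sqrt (S x) with hψdef
  have hψd : ∀ x, 0 < S x → HasDerivAt ψ ((Real.sqrt (S x))⁻¹) x := by
    intro x hSx
    have hin : HasDerivAt S B x := by
      have : HasDerivAt (fun x : ℝ => A + B * (x - M₀)) (B * 1) x :=
        (((hasDerivAt_id x).sub_const M₀).const_mul B).const_add A
      exact this.congr_deriv (mul_one B)
    have hs : HasDerivAt (fun x => Real.sqrt (S x)) (1 / (2 * Real.sqrt (S x)) * B) x :=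
      (Real.hasDerivAt_sqrt (ne_of_gt hSx)).comp x hin
    have := hs.const_mul (2 / B)
    refine this.congr_deriv ?_
    have hsp : Real.sqrt (S x) ≠ 0 := ne_of_gt (Real.sqrt_pos.2 hSx)
    have hBne : B ≠ 0 := ne_of_gt hB
    field_simp
  -- φ - ψ is monotone on Ici M₀
  have hmono : MonotoneOn (fun x => φ x - ψ x) (Set.Ici M₀) := by
    apply monotoneOn_of_hasDerivWithinAt_nonneg (f' := fun x => φ' x - (Real.sqrt (S x))⁻¹)
      (convex_Ici M₀)
    · apply ContinuousOn.sub
      · exact fun x hx => (hd1 x hx).continuousAt.continuousWithinAt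
      · apply Continuous.continuousOn
        exact continuous_const.mul (Real.continuous_sqrt.comp (by continuity))
    · intro x hx
      rw [interior_Ici] at hx
      have hx' : x ∈ Set.Ici M₀ := Set.Ioi_subset_Ici_self hx
      exact (((hd1 x hx').sub (hψd x (hSpos x hx')))).hasDerivWithinAt
    · intro x hx
      rw [interior_Ici] at hx
      have hx' : x ∈ Set.Ici M₀ := Set.Ioi_subset_Ici_self hx
      have := hge x hx'
      linarith
  -- lower bound for φ
  set c : ℝ := φ M₀ - ψ M₀ with hcdef
  have hlow : ∀ x ∈ Set.Ici M₀, c + (2 / B) * Real.sqrt (S x) ≤ φ x := by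
    intro x hx
    have := hmono hM₀ hx hx
    simp only [hψdef, hcdef] at *
    linarith
  -- φ → ∞
  have hSat : Tendsto S atTop atTop := by
    have h1 : Tendsto (fun x : ℝ => x - M₀) atTop atTop :=
      tendsto_atTop_add_const_right atTop (-M₀) tendsto_id
    have h2 : Tendsto (fun x : ℝ => B * (x - M₀)) atTop atTop :=
      h1.const_mul_atTop hB
    simpa [hSdef] using tendsto_atTop_add_const_left atTop A h2
  have hsqrtat : Tendsto (fun x => Real.sqrt (S x)) atTop atTop :=
    aux_tendsto_sqrt_atTop.comp hSat
  have hφat : Tendsto φ atTop atTop := by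
    apply tendsto_atTop_mono' atTop
      (Filter.eventually_atTop.2 ⟨M₀, fun x hx => hlow x hx⟩)
    have h2 : Tendsto (fun x => (2 / B) * Real.sqrt (S x)) atTop atTop :=
      hsqrtat.const_mul_atTop (by positivity)
    exact tendsto_atTop_add_const_left atTop c h2
  refine ⟨?_, hφat⟩
  -- squeeze
  set v : ℝ → ℝ := fun x => (2 / B) * Real.sqrt (S x) with hvdef
  have hvat : Tendsto v atTop atTop := hsqrtat.const_mul_atTop (by positivity)
  have hG : Tendsto (fun x => Real.exp (-c) * (B / 2) * (v x ^ 1 * Real.exp (-v x)))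
      atTop (nhds 0) := by
    have h0 : Tendsto (fun t : ℝ => t ^ 1 * Real.exp (-t)) atTop (nhds 0) :=
      Real.tendsto_pow_mul_exp_neg_atTop_nhds_zero 1
    have := (h0.comp hvat).const_mul (Real.exp (-c) * (B / 2))
    simpa using this
  apply squeeze_zero'
  · filter_upwards [Filter.eventually_ge_atTop M₀] with x hx
    exact div_nonneg (Real.exp_nonneg _) (le_of_lt (hpos x hx))
  · filter_upwards [Filter.eventually_ge_atTop M₀] with x hx
    have hp := hpos x hx
    have hs0 : 0 ≤ Real.sqrt (S x) := Real.sqrt_nonneg _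
    have h1 : Real.exp (-φ x) / φ' x ≤ Real.exp (-φ x) * Real.sqrt (S x) := by
      rw [div_eq_mul_inv]
      exact mul_le_mul_of_nonneg_left (hinvle x hx) (Real.exp_nonneg _)
    have h2 : Real.exp (-φ x) ≤ Real.exp (-(c + v x)) := by
      apply Real.exp_le_exp.2
      have := hlow x hx
      simp only [hvdef]; linarith
    have h3 : Real.exp (-φ x) * Real.sqrt (S x) ≤ Real.exp (-(c + v x)) * Real.sqrt (S x) :=
      mul_le_mul_of_nonneg_right h2 hs0
    have h4 : Real.exp (-(c + v x)) * Real.sqrt (S x)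
        = Real.exp (-c) * (B / 2) * (v x ^ 1 * Real.exp (-v x)) := by
      rw [neg_add, Real.exp_add]
      have : Real.sqrt (S x) = (B / 2) * v x := by
        simp only [hvdef]; field_simp
      rw [this]; ring
    calc Real.exp (-φ x) / φ' x ≤ Real.exp (-φ x) * Real.sqrt (S x) := h1
      _ ≤ Real.exp (-(c + v x)) * Real.sqrt (S x) := h3
      _ = Real.exp (-c) * (B / 2) * (v x ^ 1 * Real.exp (-v x)) := h4
  · exact hG
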